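/- The function h ↦ h·∫_{−1}^{1} (2(h−x)(1−x²))^{−1/2} dx tends to +∞ as h → +∞ (i.e. it tends to the filter atTop along atTop). -/

import Mathlib

open MeasureTheory intervalIntegral Filter Set

private lemma aux_meas (h : ℝ) :
    Measurable (fun x : ℝ => (Real.sqrt (2 * (h - x) * (1 - x ^ 2)))⁻¹) := by
  have : Continuous (fun x : ℝ => Real.sqrt (2 * (h - x) * (1 - x ^ 2))) := by
    fun_prop
  exact this.measurable.inv

/-- pointwise: for `y ≥ z ≥ 0`, `(√y)⁻¹ ≤ (√z)⁻¹`. -/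
private lemma sqrt_inv_le {y z : ℝ} (hz : 0 ≤ z) (hzy : z ≤ y) (h0 : z = 0 → y = 0) :
    (Real.sqrt y)⁻¹ ≤ (Real.sqrt z)⁻¹ := by
  rcases eq_or_lt_of_le hz with rfl | hz'
  · rw [h0 rfl]
  · exact inv_anti₀ (Real.sqrt_pos.mpr hz') (Real.sqrt_le_sqrt hzy)

private lemma aux_integrable {h : ℝ} (hh : 2 ≤ h) :
    IntervalIntegrable (fun x : ℝ => (Real.sqrt (2 * (h - x) * (1 - x ^ 2)))⁻¹)
      MeasureTheory.volume (-1) 1 := by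
  set C : ℝ := (Real.sqrt (2 * (h - 1)))⁻¹ with hC
  have hCpos : 0 < 2 * (h - 1) := by linarith
  have hC0 : 0 ≤ C := by positivity
  have nonneg : ∀ x : ℝ, 0 ≤ (Real.sqrt (2 * (h - x) * (1 - x ^ 2)))⁻¹ := fun x => by
    positivity
  -- bound on [0,1]
  have key : ∀ x ∈ Icc (0:ℝ) 1,
      (Real.sqrt (2 * (h - x) * (1 - x ^ 2)))⁻¹ ≤ C * (1 - x) ^ (-(1/2) : ℝ) := by
    intro x hx
    have hx0 : (0:ℝ) ≤ x := hx.1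
    have hx1 : x ≤ 1 := hx.2
    have h1x : (0:ℝ) ≤ 1 - x := by linarith
    have hrw : (1 - x) ^ (-(1/2) : ℝ) = (Real.sqrt (1 - x))⁻¹ := by
      rw [Real.rpow_neg h1x, Real.sqrt_eq_rpow]
    rw [hrw]
    have hle : 2 * (h - 1) * (1 - x) ≤ 2 * (h - x) * (1 - x ^ 2) := by
      nlinarith [mul_nonneg (mul_nonneg h1x hx0) (by linarith : (0:ℝ) ≤ h - 1),
        mul_nonneg (mul_nonneg h1x h1x) (by linarith : (0:ℝ) ≤ 1 + x)]
    have hzero : 2 * (h - 1) * (1 - x) = 0 → 2 * (h - x) * (1 - x ^ 2) = 0 := by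
      intro hz0
      have hx1' : x = 1 := by
        rcases mul_eq_zero.mp hz0 with h' | h'
        · exact absurd h' (by positivity)
        · linarith
      subst hx1'; ring
    calc (Real.sqrt (2 * (h - x) * (1 - x ^ 2)))⁻¹
        ≤ (Real.sqrt (2 * (h - 1) * (1 - x)))⁻¹ :=
          sqrt_inv_le (by positivity) hle hzero
      _ = C * (Real.sqrt (1 - x))⁻¹ := by
          rw [Real.sqrt_mul (le_of_lt hCpos), mul_inv, hC]
  -- bound on [-1,0]
  have key2 : ∀ x ∈ Icc (-1:ℝ) 0,
      (Real.sqrt (2 * (h - x) * (1 - x ^ 2)))⁻¹ ≤ C * (1 + x) ^ (-(1/2) : ℝ) := by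
    intro x hx
    have hx0 : (-1:ℝ) ≤ x := hx.1
    have hx1 : x ≤ 0 := hx.2
    have h1x : (0:ℝ) ≤ 1 + x := by linarith
    have hrw : (1 + x) ^ (-(1/2) : ℝ) = (Real.sqrt (1 + x))⁻¹ := by
      rw [Real.rpow_neg h1x, Real.sqrt_eq_rpow]
    rw [hrw]
    have hle : 2 * (h - 1) * (1 + x) ≤ 2 * (h - x) * (1 - x ^ 2) := by
      nlinarith [mul_nonneg (mul_nonneg h1x (by linarith : (0:ℝ) ≤ -x)) (by linarith : (0:ℝ) ≤ h + 1),
        mul_nonneg h1x (by positivity : (0:ℝ) ≤ x ^ 2 + 1)]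
    have hzero : 2 * (h - 1) * (1 + x) = 0 → 2 * (h - x) * (1 - x ^ 2) = 0 := by
      intro hz0
      have hx1' : x = -1 := by
        rcases mul_eq_zero.mp hz0 with h' | h'
        · exact absurd h' (by positivity)
        · linarith
      subst hx1'; ring
    calc (Real.sqrt (2 * (h - x) * (1 - x ^ 2)))⁻¹
        ≤ (Real.sqrt (2 * (h - 1) * (1 + x)))⁻¹ :=
          sqrt_inv_le (by positivity) hle hzero
      _ = C * (Real.sqrt (1 + x))⁻¹ := by
          rw [Real.sqrt_mul (le_of_lt hCpos), mul_inv, hC]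
  -- dominating functions are interval integrable
  have dom1 : IntervalIntegrable (fun x : ℝ => C * (1 - x) ^ (-(1/2) : ℝ))
      MeasureTheory.volume 0 1 := by
    have := (intervalIntegral.intervalIntegrable_rpow' (a := 1) (b := 0)
      (r := -(1/2)) (by norm_num)).comp_sub_left 1
    simpa using (this.const_mul C)
  have dom2 : IntervalIntegrable (fun x : ℝ => C * (1 + x) ^ (-(1/2) : ℝ))
      MeasureTheory.volume (-1) 0 := by
    have := (intervalIntegral.intervalIntegrable_rpow' (a := 0) (b := 1)
      (r := -(1/2)) (by norm_num)).comp_add_right 1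
    have h2 : IntervalIntegrable (fun x : ℝ => (x + 1) ^ (-(1/2) : ℝ))
        MeasureTheory.volume (-1) 0 := by simpa using this
    simpa [add_comm] using h2.const_mul C
  -- conclude by domination on each piece
  have p1 : IntervalIntegrable (fun x : ℝ => (Real.sqrt (2 * (h - x) * (1 - x ^ 2)))⁻¹)
      MeasureTheory.volume (-1) 0 := by
    rw [intervalIntegrable_iff] at dom2 ⊢
    refine MeasureTheory.Integrable.mono dom2 ((aux_meas h).aestronglyMeasurable.restrict) ?_
    filter_upwards [ae_restrict_mem measurableSet_uIoc] with x hx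
    have hx' : x ∈ Icc (-1:ℝ) 0 := by
      rw [Set.uIoc_of_le (by norm_num : (-1:ℝ) ≤ 0)] at hx
      exact ⟨le_of_lt hx.1, hx.2⟩
    have h1x : (0:ℝ) ≤ 1 + x := by linarith [hx'.1]
    rw [Real.norm_eq_abs, Real.norm_eq_abs, abs_of_nonneg (nonneg x),
      abs_of_nonneg (by positivity : (0:ℝ) ≤ C * (1 + x) ^ (-(1/2) : ℝ))]
    exact key2 x hx'
  have p2 : IntervalIntegrable (fun x : ℝ => (Real.sqrt (2 * (h - x) * (1 - x ^ 2)))⁻¹)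
      MeasureTheory.volume 0 1 := by
    rw [intervalIntegrable_iff] at dom1 ⊢
    refine MeasureTheory.Integrable.mono dom1 ((aux_meas h).aestronglyMeasurable.restrict) ?_
    filter_upwards [ae_restrict_mem measurableSet_uIoc] with x hx
    have hx' : x ∈ Icc (0:ℝ) 1 := by
      rw [Set.uIoc_of_le (by norm_num : (0:ℝ) ≤ 1)] at hx
      exact ⟨le_of_lt hx.1, hx.2⟩
    have h1x : (0:ℝ) ≤ 1 - x := by linarith [hx'.2]
    rw [Real.norm_eq_abs, Real.norm_eq_abs, abs_of_nonneg (nonneg x),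
      abs_of_nonneg (by positivity : (0:ℝ) ≤ C * (1 - x) ^ (-(1/2) : ℝ))]
    exact key x hx'
  exact p1.trans p2

private lemma sqrt_tendsto : Tendsto Real.sqrt atTop atTop := by
  rw [tendsto_atTop_atTop]
  intro b
  refine ⟨b ^ 2, fun a ha => ?_⟩
  have ha0 : 0 ≤ a := le_trans (sq_nonneg b) ha
  rcases le_or_gt b 0 with hb | hb
  · exact le_trans hb (Real.sqrt_nonneg a)
  · exact (Real.le_sqrt hb.le ha0).mpr ha

theorem h_times_return_time_tendsto_atTop :
    Tendsto (fun h : ℝ => h * ∫ x in (-1 : ℝ)..1, (Real.sqrt (2 * (h - x) * (1 - x ^ 2)))⁻¹)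
      atTop atTop := by
  refine tendsto_atTop_mono' atTop ?_ sqrt_tendsto
  · filter_upwards [eventually_ge_atTop (2:ℝ)] with h hh
    have h0 : (0:ℝ) ≤ h := by linarith
    set c : ℝ := (Real.sqrt (2 * (h + 1)))⁻¹ with hc
    have hcpos : 0 < Real.sqrt (2 * (h + 1)) := Real.sqrt_pos.mpr (by linarith)
    -- the integral is at least 2 * c
    have hint : 2 * c ≤ ∫ x in (-1 : ℝ)..1, (Real.sqrt (2 * (h - x) * (1 - x ^ 2)))⁻¹ := by
      have hii := aux_integrable hh
      rw [intervalIntegral.integral_of_le (by norm_num : (-1:ℝ) ≤ 1),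
        MeasureTheory.integral_Ioc_eq_integral_Ioo]
      have hIoo : IntegrableOn (fun x : ℝ => (Real.sqrt (2 * (h - x) * (1 - x ^ 2)))⁻¹)
          (Ioo (-1:ℝ) 1) MeasureTheory.volume := by
        rw [intervalIntegrable_iff_integrableOn_Ioc_of_le (by norm_num : (-1:ℝ) ≤ 1)] at hii
        exact hii.mono_set Ioo_subset_Ioc_self
      have hmono : ∫ x in Ioo (-1:ℝ) 1, c ∂MeasureTheory.volume
          ≤ ∫ x in Ioo (-1:ℝ) 1, (Real.sqrt (2 * (h - x) * (1 - x ^ 2)))⁻¹ ∂MeasureTheory.volume := by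
        refine MeasureTheory.setIntegral_mono_on (integrableOn_const ?_) hIoo
          measurableSet_Ioo ?_
        · rw [Real.volume_Ioo]; exact ENNReal.ofReal_ne_top
        · intro x hx
          have hx1 : -1 < x := hx.1
          have hx2 : x < 1 := hx.2
          have hq : (0:ℝ) < 1 - x ^ 2 := by nlinarith
          have hp : 0 < 2 * (h - x) * (1 - x ^ 2) :=
            mul_pos (by linarith) hq
          refine sqrt_inv_le hp.le ?_ (fun hz0 => absurd hz0 hp.ne')
          nlinarith [mul_nonneg (by linarith : (0:ℝ) ≤ h - x) (sq_nonneg x)]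
      have hconst : ∫ x in Ioo (-1:ℝ) 1, c ∂MeasureTheory.volume = 2 * c := by
        rw [MeasureTheory.setIntegral_const, Real.volume_real_Ioo, smul_eq_mul]
        norm_num
      linarith
    -- √h ≤ h * (2 * c)
    have hkey : Real.sqrt h ≤ h * (2 * c) := by
      have h1 : Real.sqrt h * Real.sqrt (2 * (h + 1)) ≤ 2 * h := by
        rw [← Real.sqrt_mul h0]
        calc Real.sqrt (h * (2 * (h + 1))) ≤ Real.sqrt ((2 * h) ^ 2) :=
            Real.sqrt_le_sqrt (by nlinarith)
          _ = 2 * h := Real.sqrt_sq (by linarith)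
      have : Real.sqrt h ≤ 2 * h * (Real.sqrt (2 * (h + 1)))⁻¹ := by
        rw [← le_div_iff₀ hcpos] at h1
        rwa [div_eq_mul_inv] at h1
      calc Real.sqrt h ≤ 2 * h * c := this
        _ = h * (2 * c) := by ring
    calc Real.sqrt h ≤ h * (2 * c) := hkey
      _ ≤ h * ∫ x in (-1 : ℝ)..1, (Real.sqrt (2 * (h - x) * (1 - x ^ 2)))⁻¹ :=
          mul_le_mul_of_nonneg_left hint h0
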